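/- Let n = 2m+1 with m ≥ 1 be odd. Then a_0 = 1 and for every integer j ≥ 1, a_j = 2^j/(2n) + (1/n)·Σ_{k=1}^{m} (2·cos(2πk/n))^j (an equality of real numbers). Equivalently, the Hilbert series Σ_{j≥0} a_j t^j of ℂ⟨u,v⟩^{D_{2n}} equals 1/2 + 1/(2n(1−2t)) + (1/n)·Σ_{k=1}^{m} 1/(1 − 2cos(2πk/n)·t). -/

import Mathlib

open scoped Real

noncomputable section

/-- Words in two letters. -/
abbrev FW := FreeMonoid (Fin 2)

/-- The free associative unital ℂ-algebra on two generators. -/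
abbrev FA := MonoidAlgebra ℂ FW

/-- The generator `u`. -/
def gu : FA := MonoidAlgebra.of ℂ FW (FreeMonoid.of 0)

/-- The generator `v`. -/
def gv : FA := MonoidAlgebra.of ℂ FW (FreeMonoid.of 1)

/-- The algebra endomorphism `ρ` with `ρ(u) = ξ u`, `ρ(v) = ξ⁻¹ v`, `ξ = exp(2πi/n)`. -/
def dRho (n : ℕ) : FA →ₐ[ℂ] FA :=
  MonoidAlgebra.lift ℂ FA FW
    (FreeMonoid.lift fun i : Fin 2 =>
      if i = 0 then Complex.exp (2 * Real.pi * Complex.I / n) • gu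
      else (Complex.exp (2 * Real.pi * Complex.I / n))⁻¹ • gv)

/-- The algebra endomorphism `τ` exchanging `u` and `v`. -/
def dTau : FA →ₐ[ℂ] FA :=
  MonoidAlgebra.lift ℂ FA FW
    (FreeMonoid.lift fun i : Fin 2 => if i = 0 then gv else gu)

/-- The invariant algebra `ℂ⟨u,v⟩^{D_{2n}}`. -/
def invAlg (n : ℕ) : Subalgebra ℂ FA :=
  AlgHom.equalizer (dRho n) (AlgHom.id ℂ FA) ⊓ AlgHom.equalizer dTau (AlgHom.id ℂ FA)

/-- The degree-`j` homogeneous component of `ℂ⟨u,v⟩`: the span of words of length `j`. -/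
def degComp (j : ℕ) : Submodule ℂ FA :=
  MonoidAlgebra.supported ℂ ℂ {w : FW | FreeMonoid.length w = j}

/-- `a_j`: the dimension of the degree-`j` homogeneous component of the invariant algebra. -/
def aDim (n j : ℕ) : ℕ :=
  Module.finrank ℂ ↥((invAlg n).toSubmodule ⊓ degComp j)

namespace DH
/-- swap letters -/
def sw : FW →* FW := FreeMonoid.map (fun i : Fin 2 => if i = 0 then 1 else 0)

def bal (w : FW) : ℤ := ((FreeMonoid.toList w).count 0 : ℤ) - (FreeMonoid.toList w).count 1

def ξ (n : ℕ) : ℂ := Complex.exp (2 * Real.pi * Complex.I / n)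

lemma ξ_ne_zero (n : ℕ) : ξ n ≠ 0 := Complex.exp_ne_zero _

lemma bal_one : bal 1 = 0 := rfl
lemma bal_of (i : Fin 2) : bal (FreeMonoid.of i) = if i = 0 then 1 else -1 := by
  fin_cases i <;> simp [bal, FreeMonoid.toList_of, List.count_singleton]

lemma bal_mul (w₁ w₂ : FW) : bal (w₁ * w₂) = bal w₁ + bal w₂ := by
  simp [bal, FreeMonoid.toList_mul, List.count_append]; ring

lemma dRho_of (n : ℕ) (w : FW) :
    dRho n (MonoidAlgebra.of ℂ FW w) = (ξ n) ^ (bal w) • MonoidAlgebra.of ℂ FW w := by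
  induction w using FreeMonoid.inductionOn with
  | one => rw [map_one, map_one, bal_one, zpow_zero, one_smul]
  | of i =>
      rw [dRho, MonoidAlgebra.lift_of, FreeMonoid.lift_eval_of, bal_of]
      fin_cases i <;> simp [ξ, gu, gv, zpow_neg]
  | mul x y hx hy =>
      rw [map_mul, map_mul, hx, hy, smul_mul_smul_comm, bal_mul, zpow_add₀ (ξ_ne_zero n)]

lemma sw_of (i : Fin 2) : sw (FreeMonoid.of i) = FreeMonoid.of (if i = 0 then 1 else 0) :=
  FreeMonoid.map_of _ _

lemma dTau_of (w : FW) :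
    dTau (MonoidAlgebra.of ℂ FW w) = MonoidAlgebra.of ℂ FW (sw w) := by
  induction w using FreeMonoid.inductionOn with
  | one => rw [map_one (sw), map_one, map_one]
  | of i =>
      rw [dTau, MonoidAlgebra.lift_of, FreeMonoid.lift_eval_of, sw_of]
      fin_cases i <;> simp [gu, gv]
  | mul x y hx hy => rw [map_mul, map_mul, hx, hy, map_mul, ← map_mul]


lemma sw_sw (w : FW) : sw (sw w) = w := by
  have : sw.comp sw = MonoidHom.id FW := by
    apply FreeMonoid.hom_eq
    intro i; fin_cases i <;> simp [sw_of, sw]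
  exact DFunLike.congr_fun this w

lemma length_sw (w : FW) : (sw w).length = w.length := by
  induction w using FreeMonoid.inductionOn with
  | one => rw [map_one]
  | of i => rw [sw_of]; rfl
  | mul x y hx hy => rw [map_mul, FreeMonoid.length_mul, FreeMonoid.length_mul, hx, hy]

lemma bal_sw (w : FW) : bal (sw w) = - bal w := by
  induction w using FreeMonoid.inductionOn with
  | one => rw [map_one]; rfl
  | of i => rw [sw_of]; fin_cases i <;> simp [bal_of]
  | mul x y hx hy => rw [map_mul, bal_mul, bal_mul, hx, hy]; ring

lemma dRho_coeff (n : ℕ) (f : FA) (w : FW) : (dRho n f).coeff w = ξ n ^ (bal w) * f.coeff w := by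
  induction f using MonoidAlgebra.induction_linear with
  | zero => simp
  | add f g hf hg => rw [map_add, MonoidAlgebra.coeff_add, Finsupp.add_apply, hf, hg, MonoidAlgebra.coeff_add, Finsupp.add_apply]; ring
  | single u c =>
      have h1 : (MonoidAlgebra.single u c : FA) = c • MonoidAlgebra.of ℂ FW u := by
        simp [MonoidAlgebra.of_apply, MonoidAlgebra.smul_single']
      rw [h1, map_smul, dRho_of, MonoidAlgebra.coeff_smul_apply, MonoidAlgebra.coeff_smul_apply]
      rcases eq_or_ne u w with rfl | hne
      · simp [MonoidAlgebra.of_apply, MonoidAlgebra.single_apply, smul_eq_mul]; ring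
      · simp [MonoidAlgebra.of_apply, MonoidAlgebra.single_apply, hne]

lemma dTau_coeff (f : FA) (w : FW) : (dTau f).coeff w = f.coeff (sw w) := by
  classical
  induction f using MonoidAlgebra.induction_linear with
  | zero => simp
  | add f g hf hg => rw [map_add, MonoidAlgebra.coeff_add, Finsupp.add_apply, hf, hg, MonoidAlgebra.coeff_add, Finsupp.add_apply]
  | single u c =>
      have h1 : (MonoidAlgebra.single u c : FA) = c • MonoidAlgebra.of ℂ FW u := by
        simp [MonoidAlgebra.of_apply, MonoidAlgebra.smul_single']
      rw [h1, map_smul, dTau_of, MonoidAlgebra.coeff_smul_apply, MonoidAlgebra.coeff_smul_apply]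
      have : sw u = w ↔ u = sw w := by
        constructor
        · rintro rfl; rw [sw_sw]
        · rintro rfl; rw [sw_sw]
      rw [MonoidAlgebra.of_apply, MonoidAlgebra.of_apply, MonoidAlgebra.coeff_single, MonoidAlgebra.coeff_single, Finsupp.single_apply, Finsupp.single_apply]
      simp only [this]



lemma ξ_zpow_eq_one_iff {n : ℕ} (hn : 0 < n) (b : ℤ) : ξ n ^ b = 1 ↔ (n:ℤ) ∣ b := by
  have hξ : ξ n ^ b = Complex.exp (b * (2 * Real.pi * Complex.I / n)) := by
    rw [ξ, ← Complex.exp_int_mul]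
  have hπ : (Real.pi : ℂ) ≠ 0 := by exact_mod_cast Real.pi_ne_zero
  have hn' : (n:ℂ) ≠ 0 := Nat.cast_ne_zero.2 hn.ne'
  rw [hξ, Complex.exp_eq_one_iff]
  constructor
  · rintro ⟨k, hk⟩
    refine ⟨k, ?_⟩
    have h2 : (b : ℂ) = k * n := by
      field_simp at hk
      have h3 : ((b : ℂ) - k * n) * (2 * Real.pi * Complex.I) = 0 := by rw [hk]; ring
      have := mul_eq_zero.1 h3
      rcases this with h | h
      · exact sub_eq_zero.1 h
      · exact absurd h (by simp [hπ, Complex.I_ne_zero])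
    rw [mul_comm] at h2
    exact_mod_cast h2
  · rintro ⟨k, rfl⟩
    exact ⟨k, by field_simp; push_cast; ring⟩

lemma mem_M_iff {n : ℕ} (hn : 0 < n) (j : ℕ) (f : FA) :
    f ∈ (invAlg n).toSubmodule ⊓ degComp j ↔
      (∀ w : FW, f.coeff w ≠ 0 → FreeMonoid.length w = j ∧ (n:ℤ) ∣ bal w) ∧
        (∀ w : FW, f.coeff (sw w) = f.coeff w) := by
  have h1 : f ∈ (invAlg n).toSubmodule ⊓ degComp j ↔
      (dRho n f = f ∧ dTau f = f) ∧ ∀ w : FW, f.coeff w ≠ 0 → FreeMonoid.length w = j := by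
    constructor
    · rintro ⟨⟨ha, hb⟩, hc⟩
      refine ⟨⟨ha, hb⟩, fun w hw => (MonoidAlgebra.mem_supported.1 hc) (Finsupp.mem_support_iff.2 hw)⟩
    · rintro ⟨⟨ha, hb⟩, hc⟩
      exact ⟨⟨ha, hb⟩, MonoidAlgebra.mem_supported.2 (fun w hw => hc w (Finsupp.mem_support_iff.1 hw))⟩
  rw [h1]
  have h2 : dRho n f = f ↔ ∀ w : FW, f.coeff w ≠ 0 → (n:ℤ) ∣ bal w := by
    constructor
    · intro h w hw
      have := congrArg (fun g : FA => g.coeff w) h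
      simp only [dRho_coeff] at this
      have hx : ξ n ^ bal w = 1 := by
        have h4 : ξ n ^ bal w * f.coeff w = 1 * f.coeff w := by rw [one_mul]; exact this
        exact mul_right_cancel₀ hw h4
      exact (ξ_zpow_eq_one_iff hn _).1 hx
    · intro h
      ext w
      rw [dRho_coeff]
      rcases eq_or_ne (f.coeff w) 0 with h0 | h0
      · rw [h0, mul_zero]
      · rw [(ξ_zpow_eq_one_iff hn _).2 (h w h0), one_mul]
  have h3 : dTau f = f ↔ ∀ w : FW, f.coeff (sw w) = f.coeff w := by
    constructor
    · intro h w
      have := congrArg (fun g : FA => g.coeff w) h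
      simpa only [dTau_coeff] using this
    · intro h; ext w; rw [dTau_coeff]; exact h w
  rw [h2, h3]
  constructor
  · rintro ⟨⟨ha, hb⟩, hc⟩
    exact ⟨fun w hw => ⟨hc w hw, ha w hw⟩, hb⟩
  · rintro ⟨ha, hb⟩
    exact ⟨⟨fun w hw => (ha w hw).2, hb⟩, fun w hw => (ha w hw).1⟩


lemma sw_eq_one_iff (w : FW) : sw w = 1 ↔ w = 1 :=
  ⟨fun h => by rw [← sw_sw w, h, map_one], fun h => by rw [h, map_one]⟩

lemma aDim_zero {n : ℕ} (hn : 0 < n) : aDim n 0 = 1 := by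
  classical
  set M := (invAlg n).toSubmodule ⊓ degComp 0 with hM
  let Φ : M →ₗ[ℂ] ℂ :=
    { toFun := fun f => (f : FA).coeff 1
      map_add' := fun f g => rfl
      map_smul' := fun c f => rfl }
  have hinj : Function.Injective Φ := by
    intro f g hfg
    apply Subtype.ext
    ext w
    rcases eq_or_ne ((f : FA).coeff w) ((g : FA).coeff w) with h | h
    · exact h
    have hf := (mem_M_iff hn 0 (f : FA)).1 f.2
    have hg := (mem_M_iff hn 0 (g : FA)).1 g.2
    have hw : w = 1 := by
      by_contra hw1
      have h1 : (f : FA).coeff w = 0 := by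
        by_contra h2
        exact hw1 (FreeMonoid.length_eq_zero.1 (hf.1 w h2).1)
      have h2 : (g : FA).coeff w = 0 := by
        by_contra h2
        exact hw1 (FreeMonoid.length_eq_zero.1 (hg.1 w h2).1)
      rw [h1, h2] at h; exact h rfl
    subst hw
    exact absurd hfg h
  have hsur : Function.Surjective Φ := by
    intro c
    have hmem : (MonoidAlgebra.single 1 c : FA) ∈ M := by
      rw [mem_M_iff hn]
      constructor
      · intro w hw
        have hw1 : w = 1 := by
          by_contra h
          rw [MonoidAlgebra.coeff_single, Finsupp.single_apply, if_neg (fun h' => h h'.symm)] at hw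
          exact hw rfl
        subst hw1
        exact ⟨rfl, dvd_zero _⟩
      · intro w
        rw [MonoidAlgebra.coeff_single, Finsupp.single_apply, Finsupp.single_apply]
        have : (1 : FW) = sw w ↔ (1 : FW) = w := by
          rw [eq_comm, sw_eq_one_iff, eq_comm]
        simp only [this]
    exact ⟨⟨MonoidAlgebra.single 1 c, hmem⟩, by show (MonoidAlgebra.single 1 c : FA).coeff 1 = c; simp⟩
  have e := LinearEquiv.ofBijective Φ ⟨hinj, hsur⟩
  rw [aDim, ← hM, e.finrank_eq, Module.finrank_self]

/-- the transversal set -/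
def TS (n j : ℕ) : Set FW :=
  {w | FreeMonoid.length w = j ∧ (n:ℤ) ∣ bal w ∧ (FreeMonoid.toList w).head? = some 0}

lemma TS_finite (n j : ℕ) : (TS n j).Finite := by
  apply Set.Finite.subset (List.finite_length_eq (α := Fin 2) (n := j))
  intro w hw
  exact hw.1

lemma head?_sw (w : FW) :
    (FreeMonoid.toList (sw w)).head? =
      ((FreeMonoid.toList w).head?).map (fun i : Fin 2 => if i = 0 then 1 else 0) := by
  rw [sw, FreeMonoid.toList_map, List.head?_map]

lemma sw_mem_TS {n j : ℕ} (hj : 1 ≤ j) {w : FW} (hlen : FreeMonoid.length w = j)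
    (hdvd : (n:ℤ) ∣ bal w) (hhead : (FreeMonoid.toList w).head? = some 1) :
    sw w ∈ TS n j := by
  refine ⟨by rw [length_sw, hlen], by rw [bal_sw]; exact (dvd_neg).2 hdvd, ?_⟩
  rw [head?_sw, hhead]
  rfl

lemma sw_not_mem_TS {n j : ℕ} {w : FW} (hw : w ∈ TS n j) : sw w ∉ TS n j := by
  rintro ⟨-, -, h⟩
  rw [head?_sw, hw.2.2] at h
  simp at h

lemma aDim_eq_card {n j : ℕ} (hn : 0 < n) (hj : 1 ≤ j) :
    aDim n j = Nat.card (TS n j) := by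
  classical
  haveI : Fintype (TS n j) := (TS_finite n j).fintype
  set M := (invAlg n).toSubmodule ⊓ degComp j with hM
  let Φ : M →ₗ[ℂ] (TS n j → ℂ) :=
    { toFun := fun f t => (f : FA).coeff t.1
      map_add' := fun f g => rfl
      map_smul' := fun c f => rfl }
  have key : ∀ f : M, ∀ w : FW, (f : FA).coeff w ≠ 0 → w ∉ TS n j → sw w ∈ TS n j := by
    intro f w hw hwT
    have hf := (mem_M_iff hn j (f : FA)).1 f.2
    obtain ⟨hlen, hdvd⟩ := hf.1 w hw
    have hne : FreeMonoid.toList w ≠ [] := by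
      intro h
      have h0 : FreeMonoid.length w = 0 := by
        rw [FreeMonoid.length_eq_zero]
        exact congrArg FreeMonoid.ofList h
      omega
    obtain ⟨a, ha⟩ : ∃ a, (FreeMonoid.toList w).head? = some a :=
      ⟨_, List.head?_eq_head hne⟩
    fin_cases a
    · exact absurd ⟨hlen, hdvd, ha⟩ hwT
    · exact sw_mem_TS hj hlen hdvd ha
  have hinj : Function.Injective Φ := by
    intro f g hfg
    apply Subtype.ext
    ext w
    rcases eq_or_ne ((f : FA).coeff w) ((g : FA).coeff w) with h | h
    · exact h
    exfalso
    have hf := (mem_M_iff hn j (f : FA)).1 f.2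
    have hg := (mem_M_iff hn j (g : FA)).1 g.2
    have hnz : (f : FA).coeff w ≠ 0 ∨ (g : FA).coeff w ≠ 0 := by
      by_contra hc
      push_neg at hc
      rw [hc.1, hc.2] at h; exact h rfl
    by_cases hw : w ∈ TS n j
    · exact h (congrFun hfg ⟨w, hw⟩)
    · have hsw : sw w ∈ TS n j := by
        rcases hnz with h1 | h1
        · exact key f w h1 hw
        · exact key g w h1 hw
      have h2 : (f : FA).coeff (sw w) = (g : FA).coeff (sw w) := congrFun hfg ⟨sw w, hsw⟩
      rw [hf.2 w, hg.2 w] at h2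
      exact h h2
  have hsum : ∀ (g : TS n j → ℂ) (w0 : FW),
      (∑ t : TS n j, if (t : FW) = w0 then g t else 0) =
        if h : w0 ∈ TS n j then g ⟨w0, h⟩ else 0 := by
    intro g w0
    by_cases h : w0 ∈ TS n j
    · rw [dif_pos h, Finset.sum_eq_single (⟨w0, h⟩ : TS n j)]
      · rw [if_pos rfl]
      · intro t _ ht
        rw [if_neg]
        intro he; exact ht (Subtype.ext he)
      · intro h'; exact absurd (Finset.mem_univ _) h'
    · rw [dif_neg h, Finset.sum_eq_zero]
      intro t _
      rw [if_neg]
      intro he; exact h (he ▸ t.2)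
  have coeff : ∀ (g : TS n j → ℂ) (w : FW),
      ((∑ t : TS n j,
          ((MonoidAlgebra.single (t : FW) (g t) : FA) + MonoidAlgebra.single (sw (t : FW)) (g t))) : FA).coeff w =
        (if h : w ∈ TS n j then g ⟨w, h⟩ else 0) +
          (if h : sw w ∈ TS n j then g ⟨sw w, h⟩ else 0) := by
    intro g w
    rw [MonoidAlgebra.coeff_sum, Finsupp.finset_sum_apply]
    simp only [MonoidAlgebra.coeff_add, Finsupp.add_apply, MonoidAlgebra.coeff_single, Finsupp.single_apply]
    rw [Finset.sum_add_distrib]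
    congr 1
    · exact hsum g w
    · rw [← hsum g (sw w)]
      apply Finset.sum_congr rfl
      intro t _
      have hiff : sw (t : FW) = w ↔ (t : FW) = sw w :=
        ⟨fun he => by rw [← he, sw_sw], fun he => by rw [he, sw_sw]⟩
      exact if_congr hiff rfl rfl
  have hsur : Function.Surjective Φ := by
    intro g
    set F : FA := ∑ t : TS n j,
      ((MonoidAlgebra.single (t : FW) (g t) : FA) + MonoidAlgebra.single (sw (t : FW)) (g t)) with hF
    have hmem : F ∈ M := by
      rw [mem_M_iff hn]
      constructor
      · intro w hw
        rw [hF, coeff g w] at hw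
        by_cases h1 : w ∈ TS n j
        · exact ⟨h1.1, h1.2.1⟩
        · by_cases h2 : sw w ∈ TS n j
          · refine ⟨?_, ?_⟩
            · have := h2.1; rwa [length_sw] at this
            · have := h2.2.1; rw [bal_sw] at this; exact (dvd_neg).1 this
          · rw [dif_neg h1, dif_neg h2, add_zero] at hw; exact absurd rfl hw
      · intro w
        rw [hF, coeff g w, coeff g (sw w)]
        simp only [sw_sw]
        exact add_comm _ _
    refine ⟨⟨F, hmem⟩, ?_⟩
    funext t
    show F.coeff (t : FW) = g t
    rw [hF, coeff g (t : FW), dif_pos t.2, dif_neg (sw_not_mem_TS t.2)]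
    rw [add_zero]
  have e := LinearEquiv.ofBijective Φ ⟨hinj, hsur⟩
  rw [aDim, ← hM, e.finrank_eq, Module.finrank_fintype_fun_eq_card, Nat.card_eq_fintype_card]


def wt : Fin 2 → ℤ := fun i => if i = 0 then 1 else -1

lemma bal_ofList (l : List (Fin 2)) :
    bal (FreeMonoid.ofList l) = (l.map wt).sum := by
  induction l with
  | nil => rfl
  | cons a t ih =>
      rw [FreeMonoid.ofList_cons, bal_mul, bal_of, ih, List.map_cons, List.sum_cons]
      rfl

lemma prod_zpow_sum {α : Type*} (z : ℂ) (hz : z ≠ 0) (s : Finset α) (e : α → ℤ) :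
    ∏ a ∈ s, z ^ e a = z ^ (∑ a ∈ s, e a) := by
  classical
  induction s using Finset.induction with
  | empty => simp
  | insert a s h ih => rw [Finset.prod_insert h, Finset.sum_insert h, ih, zpow_add₀ hz]

def Sset (n j : ℕ) : Set FW := {w | FreeMonoid.length w = j ∧ (n:ℤ) ∣ bal w}

lemma Sset_finite (n j : ℕ) : (Sset n j).Finite :=
  Set.Finite.subset (List.finite_length_eq (α := Fin 2) (n := j)) (fun w hw => hw.1)

lemma sw_injective : Function.Injective (sw : FW → FW) :=
  Function.Involutive.injective sw_sw

lemma card_Sset {n j : ℕ} (hj : 1 ≤ j) :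
    Nat.card (Sset n j) = 2 * Nat.card (TS n j) := by
  have hunion : Sset n j = TS n j ∪ (fun w => sw w) '' TS n j := by
    ext w
    constructor
    · rintro ⟨hlen, hdvd⟩
      have hne : FreeMonoid.toList w ≠ [] := by
        intro h
        have h0 : FreeMonoid.length w = 0 := by
          rw [FreeMonoid.length_eq_zero]
          exact congrArg FreeMonoid.ofList h
        omega
      obtain ⟨a, ha⟩ : ∃ a, (FreeMonoid.toList w).head? = some a :=
        ⟨_, List.head?_eq_head hne⟩
      fin_cases a
      · exact Or.inl ⟨hlen, hdvd, ha⟩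
      · exact Or.inr ⟨sw w, sw_mem_TS hj hlen hdvd ha, sw_sw w⟩
    · rintro (⟨h1, h2, h3⟩ | ⟨t, ⟨h1, h2, h3⟩, rfl⟩)
      · exact ⟨h1, h2⟩
      · exact ⟨by rw [length_sw, h1], by rw [bal_sw]; exact (dvd_neg).2 h2⟩
  have hdisj : Disjoint (TS n j) ((fun w => sw w) '' TS n j) := by
    rw [Set.disjoint_left]
    rintro w hw ⟨t, ht, rfl⟩
    exact sw_not_mem_TS ht hw
  rw [Nat.card_coe_set_eq, Nat.card_coe_set_eq, hunion,
    Set.ncard_union_eq hdisj (TS_finite n j) ((TS_finite n j).image _),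
    Set.ncard_image_of_injective _ sw_injective]
  ring

lemma geom_aux {n : ℕ} (hn : 0 < n) (b : ℤ) :
    ∑ k ∈ Finset.range n, ξ n ^ ((k:ℤ) * b) = if (n:ℤ) ∣ b then (n:ℂ) else 0 := by
  have hz := ξ_ne_zero n
  have hpow : ∀ k : ℕ, ξ n ^ ((k:ℤ) * b) = (ξ n ^ b) ^ k := by
    intro k
    rw [mul_comm, zpow_mul, zpow_natCast]
  rw [Finset.sum_congr rfl fun k _ => hpow k]
  by_cases hb : (n:ℤ) ∣ b
  · rw [if_pos hb, (ξ_zpow_eq_one_iff hn b).2 hb]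
    simp
  · rw [if_neg hb]
    have hb1 : ξ n ^ b ≠ 1 := fun h => hb ((ξ_zpow_eq_one_iff hn b).1 h)
    rw [geom_sum_eq hb1]
    have hξn : ξ n ^ (n:ℤ) = 1 := by
      rw [ξ, zpow_natCast, ← Complex.exp_nat_mul]
      have hne : (n:ℂ) ≠ 0 := Nat.cast_ne_zero.2 hn.ne'
      rw [show (n:ℂ) * (2 * Real.pi * Complex.I / n) = 2 * Real.pi * Complex.I by
        field_simp]
      exact Complex.exp_two_pi_mul_I
    have hxn : (ξ n ^ b) ^ n = 1 := by
      rw [← zpow_natCast, ← zpow_mul, mul_comm, zpow_mul, hξn, one_zpow]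
    rw [hxn, sub_self, zero_div]

lemma hbal_ofFn {j : ℕ} (f : Fin j → Fin 2) :
    bal (FreeMonoid.ofList (List.ofFn f)) = ∑ t, wt (f t) := by
  rw [bal_ofList, List.map_ofFn, List.sum_ofFn]
  rfl

lemma card_Sset_eq_filter {n j : ℕ} [inst : DecidablePred fun f : Fin j → Fin 2 => (n:ℤ) ∣ ∑ t, wt (f t)] :
    (Nat.card (Sset n j) : ℂ) =
      ((Finset.univ.filter fun f : Fin j → Fin 2 => (n:ℤ) ∣ ∑ t, wt (f t)).card : ℂ) := by
  congr 1
  rw [← Fintype.card_subtype, ← Nat.card_eq_fintype_card]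
  refine (Nat.card_eq_of_bijective
    (fun f => (⟨FreeMonoid.ofList (List.ofFn f.1), ?_, ?_⟩ : Sset n j)) ⟨?_, ?_⟩).symm
  · show (List.ofFn f.1).length = j
    rw [List.length_ofFn]
  · rw [hbal_ofFn]
    exact f.2
  · rintro ⟨f, hf⟩ ⟨g, hg⟩ hfg
    apply Subtype.ext
    have h1 : List.ofFn f = List.ofFn g := congrArg (fun w : Sset n j => FreeMonoid.toList w.1) hfg
    exact List.ofFn_injective h1
  · rintro ⟨w, hlen, hdvd⟩
    have hw : w = FreeMonoid.ofList (FreeMonoid.toList w) := (FreeMonoid.ofList_toList w).symm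
    have hlen' : (FreeMonoid.toList w).length = j := hlen
    subst hlen'
    refine ⟨⟨(FreeMonoid.toList w).get, ?_⟩, ?_⟩
    · rw [← hbal_ofFn, List.ofFn_get, ← hw]
      exact hdvd
    · apply Subtype.ext
      show FreeMonoid.ofList (List.ofFn (FreeMonoid.toList w).get) = w
      rw [List.ofFn_get, ← hw]

lemma key_count {n j : ℕ} (hn : 0 < n) (hj : 1 ≤ j) :
    (n : ℂ) * (Nat.card (Sset n j) : ℂ) =
      ∑ k ∈ Finset.range n, (ξ n ^ (k:ℤ) + ξ n ^ (-(k:ℤ))) ^ j := by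
  classical
  have hz := ξ_ne_zero n
  have expand : ∀ k : ℕ,
      (ξ n ^ (k:ℤ) + ξ n ^ (-(k:ℤ))) ^ j =
        ∑ f : Fin j → Fin 2, ξ n ^ ((k:ℤ) * ∑ t, wt (f t)) := by
    intro k
    have h1 : ξ n ^ (k:ℤ) + ξ n ^ (-(k:ℤ)) = ∑ i : Fin 2, ξ n ^ ((k:ℤ) * wt i) := by
      rw [Fin.sum_univ_two]
      simp [wt]
    rw [h1, Fintype.sum_pow]
    apply Finset.sum_congr rfl
    intro f _
    rw [show ∏ i, ξ n ^ ((k:ℤ) * wt (f i)) = ξ n ^ (∑ i, (k:ℤ) * wt (f i)) from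
      prod_zpow_sum _ hz _ _]
    rw [← Finset.mul_sum]
  rw [Finset.sum_congr rfl fun k _ => expand k, Finset.sum_comm]
  have inner : ∀ f : Fin j → Fin 2,
      ∑ k ∈ Finset.range n, ξ n ^ ((k:ℤ) * ∑ t, wt (f t)) =
        if (n:ℤ) ∣ ∑ t, wt (f t) then (n:ℂ) else 0 :=
    fun f => geom_aux hn _
  rw [Finset.sum_congr rfl fun f _ => inner f]
  rw [← Finset.sum_filter, Finset.sum_const, card_Sset_eq_filter (n := n) (j := j),
    nsmul_eq_mul, mul_comm]


lemma xi_cos {n : ℕ} (hn : 0 < n) (k : ℕ) :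
    ξ n ^ (k:ℤ) + ξ n ^ (-(k:ℤ)) = ((2 * Real.cos (2 * Real.pi * k / n) : ℝ) : ℂ) := by
  have h1 : ξ n ^ (k:ℤ) = Complex.exp (((2 * Real.pi * k / n : ℝ) : ℂ) * Complex.I) := by
    rw [ξ, ← Complex.exp_int_mul]
    congr 1
    push_cast
    ring
  have h2 : ξ n ^ (-(k:ℤ)) = Complex.exp ((-((2 * Real.pi * k / n : ℝ) : ℂ)) * Complex.I) := by
    rw [ξ, ← Complex.exp_int_mul]
    congr 1
    push_cast
    ring
  rw [h1, h2, Complex.exp_mul_I, Complex.exp_mul_I, Complex.cos_neg, Complex.sin_neg,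
    Complex.ofReal_mul, Complex.ofReal_cos, Complex.ofReal_ofNat]
  ring

lemma real_count {n j : ℕ} (hn : 0 < n) (hj : 1 ≤ j) :
    (n : ℝ) * (Nat.card (Sset n j) : ℝ) =
      ∑ k ∈ Finset.range n, (2 * Real.cos (2 * Real.pi * k / n)) ^ j := by
  have h := key_count (n := n) (j := j) hn hj
  rw [Finset.sum_congr rfl fun k _ => by rw [xi_cos hn k]] at h
  have h2 : (((n : ℝ) * (Nat.card (Sset n j) : ℝ) : ℝ) : ℂ) =
      ((∑ k ∈ Finset.range n, (2 * Real.cos (2 * Real.pi * k / n)) ^ j : ℝ) : ℂ) := by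
    push_cast
    push_cast at h
    exact h
  exact_mod_cast h2

end DH

/-- Hilbert series of the dihedral invariants of the free algebra of rank 2: odd case
`n = 2m+1`, coefficientwise. -/
theorem dihedral_invariants_hilbert_series_odd (m n : ℕ) (hm : 1 ≤ m) (hn : n = 2 * m + 1) :
    aDim n 0 = 1 ∧
      ∀ j : ℕ, 1 ≤ j →
        (aDim n j : ℝ) =
          2 ^ j / (2 * n) +
            (1 / n) * ∑ k ∈ Finset.Icc 1 m, (2 * Real.cos (2 * π * k / n)) ^ j := by
  have hn0 : 0 < n := by omega
  refine ⟨DH.aDim_zero hn0, fun j hj => ?_⟩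
  have h1 := DH.real_count (n := n) (j := j) hn0 hj
  have h2 := DH.card_Sset (n := n) (j := j) hj
  have hT := DH.aDim_eq_card (n := n) (j := j) hn0 hj
  set c : ℕ → ℝ := fun k => (2 * Real.cos (2 * Real.pi * k / n)) ^ j with hc
  -- split off k = 0
  have hsplit : Finset.range n = insert 0 (Finset.Icc 1 (n - 1)) := by
    ext x
    simp only [Finset.mem_range, Finset.mem_insert, Finset.mem_Icc]
    omega
  have hc0 : c 0 = 2 ^ j := by
    simp [hc, Real.cos_zero]
  have hsum0 : ∑ k ∈ Finset.range n, c k = 2 ^ j + ∑ k ∈ Finset.Icc 1 (n - 1), c k := by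
    rw [hsplit, Finset.sum_insert (by simp), hc0]
  -- reflection
  have hIcc : Finset.Icc 1 (n - 1) = Finset.Ioc 0 (2 * m) := by
    rw [hn]; rfl
  have hIoc : ∑ k ∈ Finset.Ioc 0 (2 * m), c k =
      ∑ k ∈ Finset.Ioc 0 m, c k + ∑ k ∈ Finset.Ioc m (2 * m), c k :=
    (Finset.sum_Ioc_consecutive _ (by omega) (by omega)).symm
  have hrefl : ∑ k ∈ Finset.Ioc m (2 * m), c k = ∑ k ∈ Finset.Ioc 0 m, c k := by
    apply Finset.sum_nbij' (i := fun k => n - k) (j := fun k => n - k)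
    · intro a ha
      simp only [Finset.mem_Ioc] at ha ⊢
      omega
    · intro a ha
      simp only [Finset.mem_Ioc] at ha ⊢
      omega
    · intro a ha
      simp only [Finset.mem_Ioc] at ha
      omega
    · intro a ha
      simp only [Finset.mem_Ioc] at ha
      omega
    · intro k hk
      simp only [Finset.mem_Ioc] at hk
      have hcast : ((n - k : ℕ) : ℝ) = (n : ℝ) - k := by
        rw [Nat.cast_sub (by omega)]
      have harg : 2 * Real.pi * ((n - k : ℕ) : ℝ) / n = 2 * Real.pi - 2 * Real.pi * k / n := by
        rw [hcast]
        have : (n : ℝ) ≠ 0 := Nat.cast_ne_zero.2 hn0.ne'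
        field_simp
      simp only [hc, harg, Real.cos_two_pi_sub]
  have hIcc2 : Finset.Ioc 0 m = Finset.Icc 1 m := rfl
  -- assemble
  have hS : (n : ℝ) * (Nat.card (DH.Sset n j) : ℝ) =
      2 ^ j + 2 * ∑ k ∈ Finset.Icc 1 m, c k := by
    rw [h1, hsum0, hIcc, hIoc, hrefl, hIcc2]
    ring
  rw [hT]
  have h2' : (Nat.card (DH.Sset n j) : ℝ) = 2 * (Nat.card (DH.TS n j) : ℝ) := by
    rw [h2]
    push_cast
    ring
  rw [h2'] at hS
  have hne : (n : ℝ) ≠ 0 := Nat.cast_ne_zero.2 hn0.ne'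
  have hpos : (0:ℝ) < 2 * n := by positivity
  have hgoal : (Nat.card (DH.TS n j) : ℝ) =
      (2 ^ j + 2 * ∑ k ∈ Finset.Icc 1 m, c k) / (2 * n) := by
    rw [eq_div_iff hpos.ne']
    ring_nf
    ring_nf at hS
    linarith [hS]
  rw [hgoal]
  field_simp


end
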